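/- (Condition number of the regularized frame approximation map.) The absolute condition number κ = max{‖T_N (G_N^ε)† y‖ : y ∈ ℂᴺ, ‖y‖ = 1} of the linear map y ↦ T_N (G_N^ε)† y satisfies κ = 1/√(min{σ_k : σ_k > ε}), and hence κ ≤ min{ 1/√σ_min(G_N), 1/√ε }. -/

import Mathlib

open scoped InnerProductSpace

/-- Condition number of the regularized frame approximation map `y ↦ T_N (G_N^ε)† y`:
its absolute condition number is `κ = 1/√(min{σ_k : σ_k > ε})`, and hence
`κ ≤ min{1/√σ_min(G_N), 1/√ε}`. -/
theorem stmt_15 {H : Type*} [NormedAddCommGroup H] [InnerProductSpace ℂ H]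
    {N : ℕ} (hN : 0 < N) (φ : Fin N → H) (hφ : LinearIndependent ℂ φ)
    (T : EuclideanSpace ℂ (Fin N) →ₗ[ℂ] H)
    (hT : ∀ x : EuclideanSpace ℂ (Fin N), T x = ∑ n, x n • φ n)
    (G : Matrix (Fin N) (Fin N) ℂ) (hGdef : ∀ n m, G n m = ⟪φ n, φ m⟫_ℂ)
    (σ : Fin N → ℝ) (hσ : ∀ k, 0 < σ k)
    (v : Fin N → EuclideanSpace ℂ (Fin N)) (hv : Orthonormal ℂ v)
    (heig : ∀ k, Matrix.toEuclideanCLM (𝕜 := ℂ) G (v k) = (σ k : ℂ) • v k)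
    (ξ : Fin N → H) (hξ : ∀ k, ξ k = ∑ n, v k n • φ n)
    (ε : ℝ) (hε : 0 < ε)
    (hne : (Finset.univ.filter (fun k => ε < σ k)).Nonempty) :
    IsGreatest {r : ℝ | ∃ y : EuclideanSpace ℂ (Fin N), ‖y‖ = 1 ∧
        r = ‖∑ k ∈ Finset.univ.filter (fun k => ε < σ k),
          ((σ k : ℂ)⁻¹ * ⟪v k, y⟫_ℂ) • ξ k‖}
      (Real.sqrt ((Finset.univ.filter (fun k => ε < σ k)).inf' hne σ))⁻¹ ∧
    (Real.sqrt ((Finset.univ.filter (fun k => ε < σ k)).inf' hne σ))⁻¹ ≤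
      min (Real.sqrt (Finset.univ.inf' (Finset.univ_nonempty_iff.mpr (Fin.pos_iff_nonempty.mp hN)) σ))⁻¹
        (Real.sqrt ε)⁻¹ := by
  set S : Finset (Fin N) := Finset.univ.filter (fun k => ε < σ k) with hSdef
  set m : ℝ := S.inf' hne σ with hmdef
  obtain ⟨k₀, hk₀S, hk₀⟩ := S.exists_mem_eq_inf' hne σ
  have hk₀ε : ε < σ k₀ := (Finset.mem_filter.mp hk₀S).2
  have hm_pos : 0 < m := by rw [hmdef, hk₀]; exact hε.trans hk₀ε
  -- coordinates of the matrix action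
  have hco : ∀ k n, (Matrix.toEuclideanCLM (𝕜 := ℂ) G (v k)) n = ∑ l, G n l * v k l :=
    fun _ _ => rfl
  -- inner products of the ξ's
  have hinner : ∀ j k, ⟪ξ j, ξ k⟫_ℂ = if j = k then (σ k : ℂ) else 0 := by
    intro j k
    have h1 : ⟪ξ j, ξ k⟫_ℂ = ∑ n, (starRingEnd ℂ) (v j n) * ∑ l, G n l * v k l := by
      rw [hξ, hξ, sum_inner]
      refine Finset.sum_congr rfl fun n _ => ?_
      rw [inner_smul_left, inner_sum, Finset.mul_sum, Finset.mul_sum]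
      refine Finset.sum_congr rfl fun l _ => ?_
      rw [inner_smul_right, hGdef]
      ring
    have h2 : ⟪v j, Matrix.toEuclideanCLM (𝕜 := ℂ) G (v k)⟫_ℂ
        = ∑ n, (starRingEnd ℂ) (v j n) * ∑ l, G n l * v k l := by
      simp [PiLp.inner_apply, RCLike.inner_apply, hco]
      exact Finset.sum_congr rfl fun _ _ => mul_comm _ _
    have h3 : ⟪v j, Matrix.toEuclideanCLM (𝕜 := ℂ) G (v k)⟫_ℂ
        = if j = k then (σ k : ℂ) else 0 := by
      rw [heig k, inner_smul_right, orthonormal_iff_ite.mp hv]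
      split <;> simp
    rw [h1, ← h2, h3]
  -- norm-squared of combinations of the ξ's
  have hnormsq : ∀ c : Fin N → ℂ,
      ‖∑ k ∈ S, c k • ξ k‖ ^ 2 = ∑ k ∈ S, ‖c k‖ ^ 2 * σ k := by
    intro c
    have step : ∀ j ∈ S, ⟪c j • ξ j, ∑ k ∈ S, c k • ξ k⟫_ℂ
        = ((‖c j‖ ^ 2 * σ j : ℝ) : ℂ) := by
      intro j hj
      rw [inner_sum, Finset.sum_eq_single j]
      · rw [inner_smul_left, inner_smul_right, hinner, if_pos rfl, ← mul_assoc,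
          mul_comm ((starRingEnd ℂ) (c j)) (c j), Complex.mul_conj]
        norm_cast
        rw [Complex.sq_norm]
      · intro k hk hkj
        rw [inner_smul_left, inner_smul_right, hinner, if_neg (fun h => hkj h.symm)]
        ring
      · intro hj'; exact absurd hj hj'
    rw [← @inner_self_eq_norm_sq ℂ, sum_inner, Finset.sum_congr rfl step,
      ← Complex.ofReal_sum]
    exact RCLike.ofReal_re _
  -- the value at y
  have hval : ∀ y : EuclideanSpace ℂ (Fin N),
      ‖∑ k ∈ S, ((σ k : ℂ)⁻¹ * ⟪v k, y⟫_ℂ) • ξ k‖ ^ 2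
        = ∑ k ∈ S, ‖⟪v k, y⟫_ℂ‖ ^ 2 * (σ k)⁻¹ := by
    intro y
    rw [hnormsq]
    refine Finset.sum_congr rfl fun k _ => ?_
    have hσk := (hσ k).ne'
    rw [norm_mul, mul_pow, norm_inv, Complex.norm_real, Real.norm_eq_abs, abs_of_pos (hσ k)]
    field_simp
  constructor
  constructor
  · -- membership : attained at y = v k₀
    refine ⟨v k₀, hv.1 k₀, ?_⟩
    have hval₀ : ‖∑ k ∈ S, ((σ k : ℂ)⁻¹ * ⟪v k, v k₀⟫_ℂ) • ξ k‖ ^ 2 = (σ k₀)⁻¹ := by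
      rw [hval, Finset.sum_eq_single k₀]
      · rw [orthonormal_iff_ite.mp hv, if_pos rfl]
        simp
      · intro k hk hkk₀
        rw [orthonormal_iff_ite.mp hv, if_neg hkk₀]
        simp
      · intro h; exact absurd hk₀S h
    have := congrArg Real.sqrt hval₀
    rw [Real.sqrt_sq (norm_nonneg _), Real.sqrt_inv] at this
    rw [hmdef, hk₀]
    exact this.symm
  · -- upper bound
    rintro r ⟨y, hy, rfl⟩
    have hb : ‖∑ k ∈ S, ((σ k : ℂ)⁻¹ * ⟪v k, y⟫_ℂ) • ξ k‖ ^ 2 ≤ m⁻¹ := by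
      rw [hval]
      calc ∑ k ∈ S, ‖⟪v k, y⟫_ℂ‖ ^ 2 * (σ k)⁻¹
          ≤ ∑ k ∈ S, ‖⟪v k, y⟫_ℂ‖ ^ 2 * m⁻¹ := by
            refine Finset.sum_le_sum fun k hk => ?_
            exact mul_le_mul_of_nonneg_left
              (inv_anti₀ hm_pos (Finset.inf'_le σ hk)) (by positivity)
        _ = (∑ k ∈ S, ‖⟪v k, y⟫_ℂ‖ ^ 2) * m⁻¹ := by rw [← Finset.sum_mul]
        _ ≤ ‖y‖ ^ 2 * m⁻¹ := by
            exact mul_le_mul_of_nonneg_right (hv.sum_inner_products_le y)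
              (by positivity)
        _ = m⁻¹ := by rw [hy]; ring
    have h1 : ‖∑ k ∈ S, ((σ k : ℂ)⁻¹ * ⟪v k, y⟫_ℂ) • ξ k‖ ≤ Real.sqrt m⁻¹ := by
      rw [show ‖∑ k ∈ S, ((σ k : ℂ)⁻¹ * ⟪v k, y⟫_ℂ) • ξ k‖
          = Real.sqrt (‖∑ k ∈ S, ((σ k : ℂ)⁻¹ * ⟪v k, y⟫_ℂ) • ξ k‖ ^ 2) from
        (Real.sqrt_sq (norm_nonneg _)).symm]
      exact Real.sqrt_le_sqrt hb
    rwa [Real.sqrt_inv] at h1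
  · -- the min bound
    obtain ⟨j, _, hj⟩ := Finset.univ.exists_mem_eq_inf'
      (Finset.univ_nonempty_iff.mpr (Fin.pos_iff_nonempty.mp hN)) σ
    refine le_min ?_ ?_
    · refine inv_anti₀ (Real.sqrt_pos.mpr (by rw [hj]; exact hσ j)) ?_
      exact Real.sqrt_le_sqrt (Finset.inf'_le σ (Finset.mem_univ k₀) |>.trans_eq hk₀.symm)
    · exact inv_anti₀ (Real.sqrt_pos.mpr hε)
        (Real.sqrt_le_sqrt (by rw [hmdef, hk₀]; exact hk₀ε.le))
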